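/- arXiv:2403.10503 — 3 statements merged into one kernel-verified Lean document; each statement's English description precedes it below -/
import Mathlib

section
/- The function j₁(δ) = ∑_{(k,l)∈ℤ²} |1 − πδ(k²+l²)| e^{−(π/2)δ(k²+l²)} is strictly decreasing on [1, ∞). -/
open Real

lemma aux_summable_gauss {c : ℝ} (hc : 0 < c) :
    Summable (fun k : ℤ => Real.exp (-c * (k : ℝ) ^ 2)) := by
  have ht : (0 : ℝ) < c / π := div_pos hc pi_pos
  have h := HurwitzKernelBounds.summable_f_int 0 0 ht
  refine h.congr fun n => ?_
  simp only [HurwitzKernelBounds.f_int, add_zero, pow_zero, one_mul]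
  congr 1
  field_simp

lemma aux_bound {x : ℝ} (hx : 0 ≤ x) :
    |1 - x| * Real.exp (-(x / 2)) ≤ 3 * Real.exp (-(x / 4)) := by
  have h1 : |1 - x| ≤ 1 + x := by
    rw [abs_le]; constructor <;> linarith
  have h2 : (1 + x) ≤ 3 * Real.exp (x / 4) := by
    have he : (1 + x / 8) ^ 2 ≤ Real.exp (x / 4) := by
      have h := Real.add_one_le_exp (x / 8)
      have h8 : (0:ℝ) ≤ 1 + x / 8 := by linarith
      calc (1 + x / 8) ^ 2 ≤ (Real.exp (x / 8)) ^ 2 := by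
            apply pow_le_pow_left₀ h8 (by linarith)
        _ = Real.exp (x / 4) := by
            rw [sq, ← Real.exp_add]; congr 1; ring
    nlinarith [he, sq_nonneg (x - 8/3)]
  calc |1 - x| * Real.exp (-(x / 2)) ≤ (3 * Real.exp (x / 4)) * Real.exp (-(x / 2)) := by
        apply mul_le_mul (h1.trans h2) le_rfl (Real.exp_pos _).le
        positivity
    _ = 3 * Real.exp (-(x / 4)) := by
        rw [mul_assoc, ← Real.exp_add]; congr 2; ring

lemma aux_summable {δ : ℝ} (hδ : 0 < δ) :
    Summable (fun p : ℤ × ℤ =>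
      |1 - Real.pi * δ * ((p.1 : ℝ) ^ 2 + (p.2 : ℝ) ^ 2)| *
        Real.exp (-(Real.pi / 2) * δ * ((p.1 : ℝ) ^ 2 + (p.2 : ℝ) ^ 2))) := by
  have hc : (0 : ℝ) < π * δ / 4 := by positivity
  have hs : Summable (fun p : ℤ × ℤ =>
      3 * (Real.exp (-(π * δ / 4) * (p.1 : ℝ) ^ 2) * Real.exp (-(π * δ / 4) * (p.2 : ℝ) ^ 2))) :=
    ((aux_summable_gauss hc).mul_of_nonneg (aux_summable_gauss hc)
      (fun _ => (Real.exp_pos _).le) (fun _ => (Real.exp_pos _).le)).mul_left 3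
  refine Summable.of_nonneg_of_le (fun p => by positivity) (fun p => ?_) hs
  set n : ℝ := (p.1 : ℝ) ^ 2 + (p.2 : ℝ) ^ 2 with hn
  have hn0 : 0 ≤ n := by positivity
  have hx : 0 ≤ π * δ * n := by positivity
  calc |1 - π * δ * n| * Real.exp (-(π / 2) * δ * n)
      ≤ 3 * Real.exp (-(π * δ * n / 4)) := by
        have e : -(π / 2) * δ * n = -(π * δ * n / 2) := by ring
        rw [e]; exact aux_bound hx
    _ = 3 * (Real.exp (-(π * δ / 4) * (p.1 : ℝ) ^ 2) * Real.exp (-(π * δ / 4) * (p.2 : ℝ) ^ 2)) := by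
        rw [← Real.exp_add]; congr 1; rw [hn]; ring

lemma aux_anti {n : ℝ} (hn : 1 ≤ n) :
    StrictAntiOn (fun t : ℝ => (π * t * n - 1) * Real.exp (-(π / 2) * t * n)) (Set.Ici 1) := by
  apply strictAntiOn_of_deriv_neg (convex_Ici 1)
  · apply Continuous.continuousOn; continuity
  · intro t ht
    rw [interior_Ici] at ht
    have ht1 : (1:ℝ) < t := ht
    have hd : HasDerivAt (fun t : ℝ => (π * t * n - 1) * Real.exp (-(π / 2) * t * n))
        (π * n * Real.exp (-(π / 2) * t * n) +
          (π * t * n - 1) * (Real.exp (-(π / 2) * t * n) * (-(π / 2) * n))) t := by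
      have h1 : HasDerivAt (fun t : ℝ => π * t * n - 1) (π * n) t := by
        simpa [mul_comm, mul_assoc] using
          (((hasDerivAt_id t).const_mul π).mul_const n).sub_const 1
      have h2 : HasDerivAt (fun t : ℝ => Real.exp (-(π / 2) * t * n))
          (Real.exp (-(π / 2) * t * n) * (-(π / 2) * n)) t := by
        have h0 : HasDerivAt (fun t : ℝ => -(π / 2) * t * n) (-(π / 2) * n) t := by
          simpa [mul_comm, mul_assoc] using
            (((hasDerivAt_id t).const_mul (-(π / 2))).mul_const n)
        exact h0.exp
      exact h1.mul h2
    rw [hd.deriv]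
    have key : π * n * Real.exp (-(π / 2) * t * n) +
        (π * t * n - 1) * (Real.exp (-(π / 2) * t * n) * (-(π / 2) * n))
        = Real.exp (-(π / 2) * t * n) * (π * n / 2) * (3 - π * t * n) := by ring
    rw [key]
    have hpi := Real.pi_gt_three
    have hptn : 3 < π * t * n := by
      have e1 : 0 ≤ π * t * (n - 1) :=
        mul_nonneg (mul_nonneg Real.pi_pos.le (by linarith)) (by linarith)
      have e2 : 0 < π * (t - 1) := mul_pos Real.pi_pos (by linarith)
      nlinarith
    apply mul_neg_of_pos_of_neg
    · positivity
    · linarith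

lemma aux_one_le {p : ℤ × ℤ} (hp : p ≠ (0, 0)) :
    (1:ℝ) ≤ (p.1 : ℝ) ^ 2 + (p.2 : ℝ) ^ 2 := by
  have hz : (1:ℤ) ≤ p.1 ^ 2 + p.2 ^ 2 := by
    have hp' : ¬(p.1 = 0 ∧ p.2 = 0) := by
      intro ⟨h1, h2⟩; exact hp (Prod.ext h1 h2)
    rcases not_and_or.mp hp' with h | h
    · have h1 := Int.one_le_abs (by simpa using Int.natAbs_pos.mpr h)
      nlinarith [sq_nonneg p.2, sq_abs p.1, abs_nonneg p.1]
    · have h1 := Int.one_le_abs (by simpa using Int.natAbs_pos.mpr h)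
      nlinarith [sq_nonneg p.1, sq_abs p.2, abs_nonneg p.2]
  calc (1:ℝ) = ((1:ℤ):ℝ) := by norm_num
    _ ≤ ((p.1 ^ 2 + p.2 ^ 2 : ℤ) : ℝ) := by exact_mod_cast hz
    _ = (p.1 : ℝ) ^ 2 + (p.2 : ℝ) ^ 2 := by push_cast; ring

lemma aux_abs {δ : ℝ} (hδ : 1 ≤ δ) {p : ℤ × ℤ} (hp : p ≠ (0, 0)) :
    |1 - π * δ * ((p.1 : ℝ) ^ 2 + (p.2 : ℝ) ^ 2)|
      = π * δ * ((p.1 : ℝ) ^ 2 + (p.2 : ℝ) ^ 2) - 1 := by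
  have hn := aux_one_le hp
  set n : ℝ := (p.1 : ℝ) ^ 2 + (p.2 : ℝ) ^ 2
  have hpi := Real.pi_gt_three
  have h1 : (1:ℝ) ≤ δ * n := by nlinarith
  have h2 : π * 1 ≤ π * (δ * n) := mul_le_mul_of_nonneg_left h1 Real.pi_pos.le
  rw [abs_of_nonpos (by nlinarith)]
  ring

theorem stmt_14 :
    StrictAntiOn
      (fun δ : ℝ => ∑' p : ℤ × ℤ,
        |1 - Real.pi * δ * ((p.1 : ℝ) ^ 2 + (p.2 : ℝ) ^ 2)| *
          Real.exp (-(Real.pi / 2) * δ * ((p.1 : ℝ) ^ 2 + (p.2 : ℝ) ^ 2)))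
      (Set.Ici 1) := by
  intro a ha b hb hab
  have ha1 : (1:ℝ) ≤ a := ha
  have hb1 : (1:ℝ) ≤ b := hb
  have hstrict : ∀ p : ℤ × ℤ, p ≠ (0, 0) →
      |1 - π * b * ((p.1 : ℝ) ^ 2 + (p.2 : ℝ) ^ 2)| *
        Real.exp (-(π / 2) * b * ((p.1 : ℝ) ^ 2 + (p.2 : ℝ) ^ 2))
      < |1 - π * a * ((p.1 : ℝ) ^ 2 + (p.2 : ℝ) ^ 2)| *
        Real.exp (-(π / 2) * a * ((p.1 : ℝ) ^ 2 + (p.2 : ℝ) ^ 2)) := by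
    intro p hp
    rw [aux_abs ha1 hp, aux_abs hb1 hp]
    exact aux_anti (aux_one_le hp) ha hb hab
  have hle : ∀ p : ℤ × ℤ,
      |1 - π * b * ((p.1 : ℝ) ^ 2 + (p.2 : ℝ) ^ 2)| *
        Real.exp (-(π / 2) * b * ((p.1 : ℝ) ^ 2 + (p.2 : ℝ) ^ 2))
      ≤ |1 - π * a * ((p.1 : ℝ) ^ 2 + (p.2 : ℝ) ^ 2)| *
        Real.exp (-(π / 2) * a * ((p.1 : ℝ) ^ 2 + (p.2 : ℝ) ^ 2)) := by
    intro p
    by_cases hp : p = (0, 0)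
    · subst hp; simp
    · exact (hstrict p hp).le
  have hne : ((1, 0) : ℤ × ℤ) ≠ (0, 0) := by simp
  exact Summable.tsum_lt_tsum hle (hstrict (1, 0) hne)
    (aux_summable (lt_of_lt_of_le one_pos hb1))
    (aux_summable (lt_of_lt_of_le one_pos ha1))
end

section
/- For all n with 4 ≤ n ≤ 36, the tail sum ∑_{(k,l)∈ℤ², max(|k|,|l|) ≥ 6} |L_n(π(n+1)(k²+l²))| · e^{−(π/2)(n+1)(k²+l²)} is less than 10^{−28}. -/
open Real

noncomputable def laguerre (n : ℕ) (x : ℝ) : ℝ :=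
  ∑ k ∈ Finset.range (n + 1), (n.choose k : ℝ) * (-x) ^ k / (Nat.factorial k : ℝ)

lemma laguerre_abs_le (n : ℕ) (x : ℝ) (hx : 1 ≤ x) :
    |laguerre n x| ≤ 2 ^ n * x ^ n := by
  have hx0 : 0 ≤ x := by linarith
  calc |laguerre n x| ≤ ∑ k ∈ Finset.range (n + 1),
        |(n.choose k : ℝ) * (-x) ^ k / (Nat.factorial k : ℝ)| :=
        Finset.abs_sum_le_sum_abs _ _
    _ ≤ ∑ k ∈ Finset.range (n + 1), (n.choose k : ℝ) * x ^ n := by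
        apply Finset.sum_le_sum
        intro k hk
        rw [Finset.mem_range, Nat.lt_succ_iff] at hk
        rw [abs_div, abs_mul, abs_pow, abs_neg, abs_of_nonneg hx0,
          Nat.abs_cast, Nat.abs_cast]
        have h1 : x ^ k ≤ x ^ n := pow_le_pow_right₀ hx hk
        have h2 : (1 : ℝ) ≤ (Nat.factorial k : ℝ) := by
          exact_mod_cast Nat.one_le_iff_ne_zero.2 (Nat.factorial_ne_zero k)
        calc (n.choose k : ℝ) * x ^ k / (Nat.factorial k : ℝ)
            ≤ (n.choose k : ℝ) * x ^ k / 1 := by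
              exact div_le_div_of_nonneg_left (by positivity) one_pos h2
          _ = (n.choose k : ℝ) * x ^ k := by ring
          _ ≤ (n.choose k : ℝ) * x ^ n := by
              apply mul_le_mul_of_nonneg_left h1 (by positivity)
    _ = 2 ^ n * x ^ n := by
        rw [← Finset.sum_mul]
        congr 1
        rw [← Nat.cast_sum, Nat.sum_range_choose]
        norm_num

lemma key (n : ℕ) (hn : 4 ≤ n) (hn' : n ≤ 36) (m : ℝ) (hm : 36 ≤ m) :
    |laguerre n (Real.pi * (n + 1) * m)| * Real.exp (-(Real.pi / 2) * (n + 1) * m) ≤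
      Real.exp (-72) * Real.exp (-m) := by
  have hπ : 3.1415 ≤ Real.pi := by linarith [Real.pi_gt_d6]
  set N : ℝ := (n : ℝ) with hN
  have hN4 : (4 : ℝ) ≤ N := by
    rw [hN]; exact_mod_cast hn
  have hN36 : N ≤ 36 := by
    rw [hN]; exact_mod_cast hn'
  have hm0 : (0 : ℝ) < m := by linarith
  have hp1 : (1 : ℝ) ≤ Real.pi * (N + 1) := by nlinarith
  have hx1 : (1 : ℝ) ≤ Real.pi * (N + 1) * m := by
    have := mul_le_mul hp1 hm (by norm_num) (by linarith)
    linarith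
  have h1 := laguerre_abs_le n (Real.pi * (N + 1) * m) hx1
  -- m ^ n ≤ 36 ^ n * exp (n * (m / 36 - 1))
  have hdiv : m / 36 ≤ Real.exp (m / 36 - 1) := by
    have := Real.add_one_le_exp (m / 36 - 1); linarith
  have h3 : m ^ n ≤ 36 ^ n * Real.exp (N * (m / 36 - 1)) := by
    have hgeo : (m / 36) ^ n ≤ Real.exp (m / 36 - 1) ^ n :=
      pow_le_pow_left₀ (by positivity) hdiv n
    rw [← Real.exp_nat_mul] at hgeo
    have h36 : (36 : ℝ) * (m / 36) = m := by field_simp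
    have : m ^ n = 36 ^ n * (m / 36) ^ n := by rw [← mul_pow, h36]
    rw [this, hN]
    exact mul_le_mul_of_nonneg_left hgeo (by positivity)
  -- (72 π (n+1)) ≤ exp 10
  have hexp10 : 2 * (Real.pi * (N + 1)) * 36 ≤ Real.exp 10 := by
    have h2 : (2.7182818283 : ℝ) ≤ Real.exp 1 := Real.exp_one_gt_d9.le
    have : (2.7182818283 : ℝ) ^ 10 ≤ Real.exp 1 ^ 10 := pow_le_pow_left₀ (by norm_num) h2 10
    rw [← Real.exp_nat_mul] at this
    norm_num at this
    nlinarith [Real.pi_lt_d6]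
  have hc : 2 ^ n * (Real.pi * (N + 1) * m) ^ n ≤
      Real.exp (10 * N) * (Real.exp (N * (m / 36 - 1))) := by
    have e1 : 2 ^ n * (Real.pi * (N + 1) * m) ^ n =
        (2 * (Real.pi * (N + 1)) * 36) ^ n * (m / 36) ^ n := by
      rw [← mul_pow, ← mul_pow]; congr 1; field_simp
    rw [e1]
    have e2 : (2 * (Real.pi * (N + 1)) * 36) ^ n ≤ Real.exp 10 ^ n :=
      pow_le_pow_left₀ (by positivity) hexp10 n
    rw [← Real.exp_nat_mul] at e2
    have e3 : (m / 36) ^ n ≤ Real.exp (N * (m / 36 - 1)) := by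
      have := pow_le_pow_left₀ (by positivity : (0:ℝ) ≤ m / 36) hdiv n
      rwa [← Real.exp_nat_mul] at this
    have := mul_le_mul e2 e3 (by positivity) (by positivity)
    simpa [mul_comm] using this
  calc |laguerre n (Real.pi * (N + 1) * m)| * Real.exp (-(Real.pi / 2) * (N + 1) * m)
      ≤ (2 ^ n * (Real.pi * (N + 1) * m) ^ n) * Real.exp (-(Real.pi / 2) * (N + 1) * m) := by
        exact mul_le_mul_of_nonneg_right h1 (Real.exp_pos _).le
    _ ≤ (Real.exp (10 * N) * Real.exp (N * (m / 36 - 1))) *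
          Real.exp (-(Real.pi / 2) * (N + 1) * m) :=
        mul_le_mul_of_nonneg_right hc (Real.exp_pos _).le
    _ = Real.exp (10 * N + N * (m / 36 - 1) + -(Real.pi / 2) * (N + 1) * m) := by
        rw [← Real.exp_add, ← Real.exp_add]
    _ ≤ Real.exp (-72 + -m) := by
        apply Real.exp_le_exp.2
        have hc0 : (0 : ℝ) ≤ Real.pi / 2 * (N + 1) - N / 36 - 1 := by nlinarith
        have := mul_le_mul_of_nonneg_left hm hc0
        nlinarith
    _ = Real.exp (-72) * Real.exp (-m) := Real.exp_add _ _


noncomputable def g : ℤ → ℝ := fun k => (2 : ℝ)⁻¹ ^ k.natAbs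

lemma g_summable : Summable g := by
  apply Summable.of_nat_of_neg <;>
  · simp only [g, Int.natAbs_natCast, Int.natAbs_neg]
    exact summable_geometric_of_lt_one (by norm_num) (by norm_num)

lemma g_tsum : ∑' k : ℤ, g k = 3 := by
  rw [Summable.tsum_of_nat_of_neg]
  · simp only [g, Int.natAbs_natCast, Int.natAbs_neg, Int.natAbs_zero, pow_zero]
    rw [tsum_geometric_of_lt_one (by norm_num) (by norm_num)]
    norm_num
  all_goals
    simp only [g, Int.natAbs_natCast, Int.natAbs_neg]
    exact summable_geometric_of_lt_one (by norm_num) (by norm_num)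

lemma g_nonneg (k : ℤ) : 0 ≤ g k := by unfold g; positivity

noncomputable def G : ℤ × ℤ → ℝ := fun p => Real.exp (-72) * (g p.1 * g p.2)

lemma exp_neg_sq_le_g (k : ℤ) : Real.exp (-(k : ℝ) ^ 2) ≤ g k := by
  have habs : ((k.natAbs : ℝ)) ^ 2 = (k : ℝ) ^ 2 := by
    push_cast [Nat.cast_natAbs]
    exact sq_abs _
  have h1 : (k.natAbs : ℝ) ≤ (k : ℝ) ^ 2 := by
    rw [← habs]
    have : k.natAbs ≤ k.natAbs ^ 2 := Nat.le_self_pow two_ne_zero _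
    exact_mod_cast this
  calc Real.exp (-(k : ℝ) ^ 2) ≤ Real.exp (-(k.natAbs : ℝ)) :=
        Real.exp_le_exp.2 (by linarith)
    _ = Real.exp (-1) ^ k.natAbs := by
        rw [← Real.exp_nat_mul]; ring_nf
    _ ≤ (2 : ℝ)⁻¹ ^ k.natAbs := by
        apply pow_le_pow_left₀ (Real.exp_pos _).le
        rw [Real.exp_neg]
        have h2 : (2 : ℝ) ≤ Real.exp 1 := by
          linarith [Real.exp_one_gt_d9]
        exact inv_anti₀ (by norm_num) h2
    _ = g k := rfl

lemma g_norm_summable : Summable fun k : ℤ => ‖g k‖ := by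
  have : (fun k : ℤ => ‖g k‖) = g := by
    funext k; rw [Real.norm_eq_abs, abs_of_nonneg (g_nonneg k)]
  rw [this]; exact g_summable

lemma gg_summable : Summable fun p : ℤ × ℤ => g p.1 * g p.2 :=
  summable_mul_of_summable_norm g_norm_summable g_norm_summable

lemma G_summable : Summable G := gg_summable.mul_left _

lemma G_tsum : ∑' p : ℤ × ℤ, G p = Real.exp (-72) * 9 := by
  unfold G
  rw [tsum_mul_left, ← Summable.tsum_mul_tsum g_summable g_summable gg_summable, g_tsum]
  norm_num

theorem stmt_17 (n : ℕ) (hn : 4 ≤ n) (hn' : n ≤ 36) :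
    ∑' p : {p : ℤ × ℤ // 6 ≤ max |p.1| |p.2|},
        |laguerre n (Real.pi * (n + 1) *
            (((p.1 : ℤ × ℤ).1 : ℝ) ^ 2 + ((p.1 : ℤ × ℤ).2 : ℝ) ^ 2))| *
          Real.exp (-(Real.pi / 2) * (n + 1) *
            (((p.1 : ℤ × ℤ).1 : ℝ) ^ 2 + ((p.1 : ℤ × ℤ).2 : ℝ) ^ 2)) <
      10 ^ (-(28 : ℤ)) := by
  set f : ℤ × ℤ → ℝ := fun p =>
    |laguerre n (Real.pi * (n + 1) * ((p.1 : ℝ) ^ 2 + (p.2 : ℝ) ^ 2))| *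
      Real.exp (-(Real.pi / 2) * (n + 1) * ((p.1 : ℝ) ^ 2 + (p.2 : ℝ) ^ 2)) with hf
  have hfG : ∀ p : {p : ℤ × ℤ // 6 ≤ max |p.1| |p.2|}, f p.1 ≤ G p.1 := by
    rintro ⟨⟨k, l⟩, hp⟩
    simp only [hf]
    have hm : (36 : ℝ) ≤ (k : ℝ) ^ 2 + (l : ℝ) ^ 2 := by
      rcases le_max_iff.1 hp with h | h
      · have : (36 : ℤ) ≤ k ^ 2 := by nlinarith [abs_nonneg k, sq_abs k]
        have hl : (0 : ℝ) ≤ (l : ℝ) ^ 2 := sq_nonneg _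
        have : (36 : ℝ) ≤ (k : ℝ) ^ 2 := by exact_mod_cast this
        linarith
      · have : (36 : ℤ) ≤ l ^ 2 := by nlinarith [abs_nonneg l, sq_abs l]
        have hk : (0 : ℝ) ≤ (k : ℝ) ^ 2 := sq_nonneg _
        have : (36 : ℝ) ≤ (l : ℝ) ^ 2 := by exact_mod_cast this
        linarith
    calc |laguerre n (Real.pi * (n + 1) * ((k : ℝ) ^ 2 + (l : ℝ) ^ 2))| *
          Real.exp (-(Real.pi / 2) * (n + 1) * ((k : ℝ) ^ 2 + (l : ℝ) ^ 2))
        ≤ Real.exp (-72) * Real.exp (-((k : ℝ) ^ 2 + (l : ℝ) ^ 2)) := key n hn hn' _ hm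
      _ ≤ Real.exp (-72) * (g k * g l) := by
          apply mul_le_mul_of_nonneg_left _ (Real.exp_pos _).le
          rw [show -((k : ℝ) ^ 2 + (l : ℝ) ^ 2) = -(k : ℝ) ^ 2 + -(l : ℝ) ^ 2 by ring,
            Real.exp_add]
          exact mul_le_mul (exp_neg_sq_le_g k) (exp_neg_sq_le_g l)
            (Real.exp_pos _).le (g_nonneg k)
      _ = G (k, l) := rfl
  have hGsub : Summable fun p : {p : ℤ × ℤ // 6 ≤ max |p.1| |p.2|} => G p.1 :=
    G_summable.subtype _
  have hfsub : Summable fun p : {p : ℤ × ℤ // 6 ≤ max |p.1| |p.2|} => f p.1 :=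
    Summable.of_nonneg_of_le (fun p => by positivity) hfG hGsub
  have step1 : (∑' p : {p : ℤ × ℤ // 6 ≤ max |p.1| |p.2|}, f p.1) ≤
      ∑' p : {p : ℤ × ℤ // 6 ≤ max |p.1| |p.2|}, G p.1 :=
    Summable.tsum_le_tsum hfG hfsub hGsub
  have step2 : (∑' p : {p : ℤ × ℤ // 6 ≤ max |p.1| |p.2|}, G p.1) ≤ ∑' p : ℤ × ℤ, G p :=
    Summable.tsum_subtype_le G {p : ℤ × ℤ | 6 ≤ max |p.1| |p.2|}
      (fun p => mul_nonneg (Real.exp_pos _).le (mul_nonneg (g_nonneg _) (g_nonneg _))) G_summable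
  have step3 : Real.exp (-72) * 9 < 10 ^ (-(28 : ℤ)) := by
    have h1 : (2.7 : ℝ) ^ 72 ≤ Real.exp 72 := by
      have h2 : (2.7 : ℝ) ^ 72 ≤ Real.exp 1 ^ 72 :=
        pow_le_pow_left₀ (by norm_num) (by linarith [Real.exp_one_gt_d9]) 72
      rwa [← Real.exp_nat_mul, show ((72 : ℕ) : ℝ) * 1 = 72 by norm_num] at h2
    rw [Real.exp_neg, mul_comm, ← div_eq_mul_inv, div_lt_iff₀ (Real.exp_pos _)]
    calc (9 : ℝ) < 10 ^ (-(28 : ℤ)) * 2.7 ^ 72 := by norm_num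
      _ ≤ 10 ^ (-(28 : ℤ)) * Real.exp 72 :=
          mul_le_mul_of_nonneg_left h1 (by positivity)
  calc (∑' p : {p : ℤ × ℤ // 6 ≤ max |p.1| |p.2|}, f p.1) ≤ ∑' p : ℤ × ℤ, G p :=
        le_trans step1 step2
    _ = Real.exp (-72) * 9 := G_tsum
    _ < 10 ^ (-(28 : ℤ)) := step3
end

section
/- For all real numbers δ with 11 ≤ δ ≤ 16, the tail sum ∑_{(k,l)∈ℤ², k²+l² ≥ 8} |L₁₅(πδ(k²+l²))| · e^{−(πδ/2)(k²+l²)} ≤ 10^{−12}, where L₁₅ is the fifteenth Laguerre polynomial. -/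
set_option maxRecDepth 8000
set_option maxHeartbeats 1000000

lemma decay15 {t0 t c : ℝ} (h0 : 0 < t0) (ht : t0 ≤ t) (hc : 15 / t0 ≤ c) :
    t ^ 15 * Real.exp (-(c * t)) ≤ t0 ^ 15 * Real.exp (-(c * t0)) := by
  have htpos : 0 < t := h0.trans_le ht
  have h1 : t / t0 ≤ Real.exp ((t - t0) / t0) := by
    have h := Real.add_one_le_exp ((t - t0) / t0)
    have e : t / t0 = (t - t0) / t0 + 1 := by field_simp; ring
    linarith
  have h2 : (t / t0) ^ 15 ≤ Real.exp ((t - t0) / t0) ^ 15 :=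
    pow_le_pow_left₀ (by positivity) h1 15
  have h3 : Real.exp ((t - t0) / t0) ^ 15 = Real.exp (15 * ((t - t0) / t0)) := by
    rw [← Real.exp_nat_mul]; norm_num
  have h4 : 15 * ((t - t0) / t0) ≤ c * (t - t0) := by
    have hnn : 0 ≤ t - t0 := by linarith
    have e : 15 * ((t - t0) / t0) = 15 / t0 * (t - t0) := by ring
    rw [e]
    exact mul_le_mul_of_nonneg_right hc hnn
  have h5 : t ^ 15 ≤ t0 ^ 15 * Real.exp (c * (t - t0)) := by
    have e1 : t ^ 15 = t0 ^ 15 * (t / t0) ^ 15 := by field_simp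
    rw [e1]
    refine mul_le_mul_of_nonneg_left ?_ (by positivity)
    exact h2.trans (by rw [h3]; exact Real.exp_le_exp.2 h4)
  calc t ^ 15 * Real.exp (-(c * t))
      ≤ t0 ^ 15 * Real.exp (c * (t - t0)) * Real.exp (-(c * t)) :=
        mul_le_mul_of_nonneg_right h5 (Real.exp_nonneg _)
    _ = t0 ^ 15 * Real.exp (-(c * t0)) := by
        rw [mul_assoc, ← Real.exp_add]; congr 1; ring

lemma laguerre_bound {x : ℝ} (hx : 1 ≤ x) : |laguerre 15 x| ≤ 102960 * x ^ 15 := by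
  have hx0 : 0 ≤ x := by linarith
  unfold laguerre
  refine (Finset.abs_sum_le_sum_abs _ _).trans ?_
  have hterm : ∀ k ∈ Finset.range 16,
      |(Nat.choose 15 k : ℝ) * (-x) ^ k / (Nat.factorial k : ℝ)| ≤ 6435 * x ^ 15 := by
    intro k hk
    rw [Finset.mem_range] at hk
    have h1 : |(Nat.choose 15 k : ℝ) * (-x) ^ k / (Nat.factorial k : ℝ)|
        = (Nat.choose 15 k : ℝ) * x ^ k / (Nat.factorial k : ℝ) := by
      rw [abs_div, abs_mul, abs_pow, abs_neg, abs_of_nonneg hx0,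
        abs_of_nonneg (by positivity : (0:ℝ) ≤ (Nat.choose 15 k : ℝ)),
        abs_of_nonneg (by positivity : (0:ℝ) ≤ (Nat.factorial k : ℝ))]
    rw [h1]
    have hc : (Nat.choose 15 k : ℝ) ≤ 6435 := by
      have := Nat.choose_le_middle k 15
      norm_num at this
      exact_mod_cast this
    have hfac : (1:ℝ) ≤ (Nat.factorial k : ℝ) := by
      exact_mod_cast Nat.one_le_iff_ne_zero.2 (Nat.factorial_ne_zero k)
    have hpow : x ^ k ≤ x ^ 15 := pow_le_pow_right₀ hx (by omega)
    calc (Nat.choose 15 k : ℝ) * x ^ k / (Nat.factorial k : ℝ)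
        ≤ (Nat.choose 15 k : ℝ) * x ^ k / 1 := by
          apply div_le_div_of_nonneg_left ?_ ?_ hfac <;> positivity
      _ = (Nat.choose 15 k : ℝ) * x ^ k := by ring
      _ ≤ 6435 * x ^ 15 := by
          apply mul_le_mul hc hpow (by positivity) (by norm_num)
  calc ∑ k ∈ Finset.range 16, |(Nat.choose 15 k : ℝ) * (-x) ^ k / (Nat.factorial k : ℝ)|
      ≤ ∑ _k ∈ Finset.range 16, 6435 * x ^ 15 := Finset.sum_le_sum hterm
    _ = 102960 * x ^ 15 := by
        rw [Finset.sum_const, Finset.card_range]; ring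

lemma int_geom_summable {r : ℝ} (h0 : 0 ≤ r) (h1 : r < 1) :
    Summable (fun k : ℤ => r ^ k.natAbs) := by
  apply Summable.of_nat_of_neg
  · simpa using summable_geometric_of_lt_one h0 h1
  · simpa using summable_geometric_of_lt_one h0 h1

lemma int_geom_tsum_le {r : ℝ} (h0 : 0 ≤ r) (h1 : r ≤ 1 / 2) :
    ∑' k : ℤ, r ^ k.natAbs ≤ 3 := by
  have hr1 : r < 1 := h1.trans_lt (by norm_num)
  have hs : Summable (fun n : ℕ => r ^ n) := summable_geometric_of_lt_one h0 hr1
  have h2 : (fun n : ℕ => r ^ ((n : ℤ)).natAbs) = fun n : ℕ => r ^ n := by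
    funext n; simp
  have h3 : (fun n : ℕ => r ^ ((-(n + 1) : ℤ)).natAbs) = fun n : ℕ => r * r ^ n := by
    funext n
    have : ((-(n + 1) : ℤ)).natAbs = n + 1 := by omega
    rw [this, pow_succ]; ring
  rw [tsum_of_nat_of_neg_add_one (by rw [h2]; exact hs) (by rw [h3]; exact hs.mul_left r), h2, h3,
    tsum_geometric_of_lt_one h0 hr1, tsum_mul_left, tsum_geometric_of_lt_one h0 hr1]
  have hd : (1:ℝ)/2 ≤ 1 - r := by linarith
  have : (1 - r)⁻¹ ≤ 2 := by
    rw [inv_le_comm₀ (by linarith) (by norm_num)]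
    linarith
  nlinarith [inv_nonneg.2 (by linarith : (0:ℝ) ≤ 1 - r)]

lemma big_exp : (9 * 102960 * 8 ^ 15 * 34 ^ 15 * 10 ^ 12 : ℝ) ≤ Real.exp (15 / 4 * 34) := by
  have h1 : (9 * 102960 * 8 ^ 15 * 34 ^ 15 * 10 ^ 12 : ℝ) ≤ 2.7182818283 ^ 127 := by
    norm_num
  have h2 : (2.7182818283 : ℝ) ^ 127 ≤ Real.exp 1 ^ 127 :=
    pow_le_pow_left₀ (by norm_num) (le_of_lt Real.exp_one_gt_d9) 127
  have h3 : Real.exp 1 ^ 127 = Real.exp 127 := by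
    rw [← Real.exp_nat_mul]; norm_num
  have h4 : Real.exp 127 ≤ Real.exp (15 / 4 * 34) := Real.exp_le_exp.2 (by norm_num)
  linarith

theorem stmt_18 (δ : ℝ) (h1 : 11 ≤ δ) (h2 : δ ≤ 16) :
    ∑' p : {p : ℤ × ℤ // 8 ≤ p.1 ^ 2 + p.2 ^ 2},
        |laguerre 15 (Real.pi * δ *
            (((p.1 : ℤ × ℤ).1 : ℝ) ^ 2 + ((p.1 : ℤ × ℤ).2 : ℝ) ^ 2))| *
          Real.exp (-(Real.pi * δ / 2) *
            (((p.1 : ℤ × ℤ).1 : ℝ) ^ 2 + ((p.1 : ℤ × ℤ).2 : ℝ) ^ 2)) ≤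
      10 ^ (-(12 : ℤ)) := by
  set a : ℝ := Real.pi * δ with ha
  have hπ : 3.141592 < Real.pi := Real.pi_gt_d6
  have ha34 : 34 ≤ a := by rw [ha]; nlinarith
  set r : ℝ := Real.exp (-(a / 32)) with hrdef
  have hr0 : 0 ≤ r := Real.exp_nonneg _
  have hrhalf : r ≤ 1 / 2 := by
    have h1' : r ≤ Real.exp (-1) := Real.exp_le_exp.2 (by linarith)
    have h2' : Real.exp (-1) ≤ 1 / 2 := by
      rw [Real.exp_neg]
      rw [inv_le_comm₀ (Real.exp_pos 1) (by norm_num)]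
      have := Real.exp_one_gt_d9
      linarith
    linarith
  have hr1 : r < 1 := hrhalf.trans_lt (by norm_num)
  set M : ℝ := 102960 * a ^ 15 * 8 ^ 15 * Real.exp (-(15 / 4 * a)) with hMdef
  have hM0 : 0 ≤ M := by positivity
  have hSr : Summable (fun k : ℤ => r ^ k.natAbs) := int_geom_summable hr0 hr1
  have hnorm : Summable (fun k : ℤ => ‖r ^ k.natAbs‖) := by
    simp only [Real.norm_eq_abs, abs_pow, abs_of_nonneg hr0]; exact hSr
  have hprod : Summable (fun q : ℤ × ℤ => r ^ q.1.natAbs * r ^ q.2.natAbs) :=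
    summable_mul_of_summable_norm hnorm hnorm
  set g : ℤ × ℤ → ℝ := fun q => M * (r ^ q.1.natAbs * r ^ q.2.natAbs) with hgdef
  have hg : Summable g := hprod.mul_left M
  have hg0 : ∀ q, 0 ≤ g q := fun q => by positivity
  have hbound : ∀ p : {p : ℤ × ℤ // 8 ≤ p.1 ^ 2 + p.2 ^ 2},
      |laguerre 15 (a * (((p.1 : ℤ × ℤ).1 : ℝ) ^ 2 + ((p.1 : ℤ × ℤ).2 : ℝ) ^ 2))| *
        Real.exp (-(a / 2) * (((p.1 : ℤ × ℤ).1 : ℝ) ^ 2 + ((p.1 : ℤ × ℤ).2 : ℝ) ^ 2)) ≤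
      g p.1 := by
    rintro ⟨⟨k, l⟩, hp⟩
    simp only at hp ⊢
    set n : ℝ := (k : ℝ) ^ 2 + (l : ℝ) ^ 2 with hn
    have hn8 : (8 : ℝ) ≤ n := by
      rw [hn]; exact_mod_cast hp
    have hn0 : 0 ≤ n := by linarith
    have hx1 : 1 ≤ a * n := by nlinarith
    have hL := laguerre_bound hx1
    have hexp_split : Real.exp (-(a / 2) * n)
        = Real.exp (-(15 * a / 32 * n)) * Real.exp (-(a / 32 * n)) := by
      rw [← Real.exp_add]; congr 1; ring
    have hstep1 : n ^ 15 * Real.exp (-(15 * a / 32 * n))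
        ≤ 8 ^ 15 * Real.exp (-(15 / 4 * a)) := by
      have := decay15 (t0 := 8) (t := n) (c := 15 * a / 32) (by norm_num) hn8 (by linarith)
      calc n ^ 15 * Real.exp (-(15 * a / 32 * n))
          ≤ 8 ^ 15 * Real.exp (-(15 * a / 32 * 8)) := this
        _ = 8 ^ 15 * Real.exp (-(15 / 4 * a)) := by congr 1; congr 1; ring
    have hsq : ∀ m : ℤ, Real.exp (-(a / 32 * (m : ℝ) ^ 2)) ≤ r ^ m.natAbs := by
      intro m
      have hm : (m.natAbs : ℝ) ≤ (m : ℝ) ^ 2 := by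
        have e : ((m : ℝ)) ^ 2 = ((m.natAbs : ℝ)) ^ 2 := by
          rw [Nat.cast_natAbs, Int.cast_abs, sq_abs]
        rw [e]
        have : (m.natAbs : ℝ) * 1 ≤ (m.natAbs : ℝ) * (m.natAbs : ℝ) ∨ m.natAbs = 0 := by
          rcases Nat.eq_zero_or_pos m.natAbs with h | h
          · right; exact h
          · left
            apply mul_le_mul_of_nonneg_left _ (by positivity)
            exact_mod_cast h
        rcases this with h | h
        · nlinarith
        · simp [h]
      have : r ^ m.natAbs = Real.exp ((m.natAbs : ℝ) * (-(a / 32))) := by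
        rw [Real.exp_nat_mul]
      rw [this]
      apply Real.exp_le_exp.2
      nlinarith
    have hstep2 : Real.exp (-(a / 32 * n)) ≤ r ^ k.natAbs * r ^ l.natAbs := by
      have e : Real.exp (-(a / 32 * n))
          = Real.exp (-(a / 32 * (k : ℝ) ^ 2)) * Real.exp (-(a / 32 * (l : ℝ) ^ 2)) := by
        rw [← Real.exp_add]; congr 1; rw [hn]; ring
      rw [e]
      exact mul_le_mul (hsq k) (hsq l) (Real.exp_nonneg _) (pow_nonneg hr0 _)
    calc |laguerre 15 (a * n)| * Real.exp (-(a / 2) * n)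
        ≤ 102960 * (a * n) ^ 15 * Real.exp (-(a / 2) * n) :=
          mul_le_mul_of_nonneg_right hL (Real.exp_nonneg _)
      _ = 102960 * a ^ 15 * (n ^ 15 * Real.exp (-(15 * a / 32 * n))) *
            Real.exp (-(a / 32 * n)) := by
          rw [hexp_split, mul_pow]; ring
      _ ≤ 102960 * a ^ 15 * (8 ^ 15 * Real.exp (-(15 / 4 * a))) *
            (r ^ k.natAbs * r ^ l.natAbs) := by
          apply mul_le_mul _ hstep2 (Real.exp_nonneg _) (by positivity)
          exact mul_le_mul_of_nonneg_left hstep1 (by positivity)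
      _ = g (k, l) := by rw [hgdef, hMdef]; ring
  have hF0 : ∀ p : {p : ℤ × ℤ // 8 ≤ p.1 ^ 2 + p.2 ^ 2},
      0 ≤ |laguerre 15 (a * (((p.1 : ℤ × ℤ).1 : ℝ) ^ 2 + ((p.1 : ℤ × ℤ).2 : ℝ) ^ 2))| *
        Real.exp (-(a / 2) * (((p.1 : ℤ × ℤ).1 : ℝ) ^ 2 + ((p.1 : ℤ × ℤ).2 : ℝ) ^ 2)) :=
    fun p => mul_nonneg (abs_nonneg _) (Real.exp_nonneg _)
  have hgS : Summable (fun p : {p : ℤ × ℤ // 8 ≤ p.1 ^ 2 + p.2 ^ 2} => g p.1) :=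
    hg.subtype _
  have hFsum : Summable (fun p : {p : ℤ × ℤ // 8 ≤ p.1 ^ 2 + p.2 ^ 2} =>
      |laguerre 15 (a * (((p.1 : ℤ × ℤ).1 : ℝ) ^ 2 + ((p.1 : ℤ × ℤ).2 : ℝ) ^ 2))| *
        Real.exp (-(a / 2) * (((p.1 : ℤ × ℤ).1 : ℝ) ^ 2 + ((p.1 : ℤ × ℤ).2 : ℝ) ^ 2))) :=
    Summable.of_nonneg_of_le hF0 hbound hgS
  have hS3 : ∑' k : ℤ, r ^ k.natAbs ≤ 3 := int_geom_tsum_le hr0 hrhalf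
  have hS0 : 0 ≤ ∑' k : ℤ, r ^ k.natAbs := tsum_nonneg fun k => pow_nonneg hr0 _
  have key : ∑' p : {p : ℤ × ℤ // 8 ≤ p.1 ^ 2 + p.2 ^ 2},
      |laguerre 15 (a * (((p.1 : ℤ × ℤ).1 : ℝ) ^ 2 + ((p.1 : ℤ × ℤ).2 : ℝ) ^ 2))| *
        Real.exp (-(a / 2) * (((p.1 : ℤ × ℤ).1 : ℝ) ^ 2 + ((p.1 : ℤ × ℤ).2 : ℝ) ^ 2)) ≤
      10 ^ (-(12 : ℤ)) := by
    calc ∑' p : {p : ℤ × ℤ // 8 ≤ p.1 ^ 2 + p.2 ^ 2},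
        |laguerre 15 (a * (((p.1 : ℤ × ℤ).1 : ℝ) ^ 2 + ((p.1 : ℤ × ℤ).2 : ℝ) ^ 2))| *
          Real.exp (-(a / 2) * (((p.1 : ℤ × ℤ).1 : ℝ) ^ 2 + ((p.1 : ℤ × ℤ).2 : ℝ) ^ 2))
        ≤ ∑' p : {p : ℤ × ℤ // 8 ≤ p.1 ^ 2 + p.2 ^ 2}, g p.1 :=
          Summable.tsum_le_tsum hbound hFsum hgS
      _ ≤ ∑' q : ℤ × ℤ, g q := Summable.tsum_subtype_le g _ hg0 hg
      _ = M * ((∑' k : ℤ, r ^ k.natAbs) * (∑' k : ℤ, r ^ k.natAbs)) := by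
          rw [hgdef, tsum_mul_left, tsum_mul_tsum_of_summable_norm hnorm hnorm]
      _ ≤ M * (3 * 3) := by
          apply mul_le_mul_of_nonneg_left _ hM0
          exact mul_le_mul hS3 hS3 hS0 (by norm_num)
      _ ≤ 10 ^ (-(12 : ℤ)) := by
          have hd : a ^ 15 * Real.exp (-(15 / 4 * a))
              ≤ 34 ^ 15 * Real.exp (-(15 / 4 * 34)) :=
            decay15 (by norm_num) ha34 (by norm_num)
          calc M * (3 * 3)
              = 9 * 102960 * 8 ^ 15 * (a ^ 15 * Real.exp (-(15 / 4 * a))) := by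
                rw [hMdef]; ring
            _ ≤ 9 * 102960 * 8 ^ 15 * (34 ^ 15 * Real.exp (-(15 / 4 * 34))) :=
                mul_le_mul_of_nonneg_left hd (by positivity)
            _ ≤ 10 ^ (-(12 : ℤ)) := by
                have h10 : ((10 : ℝ)) ^ (-(12 : ℤ)) = ((10 ^ 12 : ℝ))⁻¹ := by
                  norm_num
                rw [Real.exp_neg,
                  show (9 : ℝ) * 102960 * 8 ^ 15 * (34 ^ 15 * (Real.exp (15 / 4 * 34))⁻¹)
                    = 9 * 102960 * 8 ^ 15 * 34 ^ 15 / Real.exp (15 / 4 * 34) from by ring,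
                  div_le_iff₀ (Real.exp_pos _), h10]
                nlinarith [big_exp, Real.exp_pos (15 / 4 * 34)]
  exact key
end
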